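/- Let P ∈ ℝ^{n×k}, let Q ∈ ℝ^{m×k} have full column rank, let y ∈ ℝ^m, and set K := QᵀQ, c := K^{-1/2} Qᵀ y, s := √(yᵀy − cᵀc), and R := P K^{1/2} ∈ ℝ^{n×k}. Then for every w ∈ ℝ^n, ‖Q Pᵀ w − y‖₂² = ‖Rᵀ w − c‖₂² + s². Consequently, for all ε ≥ 0 and λ ≥ 0, the optimal value of min_{w} ‖Q Pᵀ w − y‖₂ + ε‖w‖₂ + λ‖w‖₁ equals the optimal value of min_{w} √(‖Rᵀ w − c‖₂² + s²) + ε‖w‖₂ + λ‖w‖₁. -/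

import Mathlib

open Matrix

/-- Euclidean norm of a vector in `ℝ^n`. -/
noncomputable def norm2 {n : ℕ} (x : Fin n → ℝ) : ℝ := Real.sqrt (∑ i, x i ^ 2)

/-- ℓ1 norm of a vector in `ℝ^n`. -/
noncomputable def norm1 {n : ℕ} (x : Fin n → ℝ) : ℝ := ∑ i, |x i|

/-- The square root of a positive semidefinite matrix, as `Matrix.PosSemidef.sqrt` was defined
in older Mathlib (removed since). -/
noncomputable def Matrix.PosSemidef.sqrtOld {n : Type*} [Fintype n] [DecidableEq n]
    {A : Matrix n n ℝ} (hA : A.PosSemidef) : Matrix n n ℝ :=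
  hA.1.eigenvectorUnitary.1 * diagonal ((↑) ∘ (Real.sqrt ∘ hA.1.eigenvalues)) *
    (star hA.1.eigenvectorUnitary : Matrix n n ℝ)

private lemma sqrtOld_isHermitian {n : Type*} [Fintype n] [DecidableEq n]
    {A : Matrix n n ℝ} (hA : A.PosSemidef) : hA.sqrtOld.IsHermitian := by
  unfold Matrix.PosSemidef.sqrtOld
  rw [star_eq_conjTranspose]
  exact isHermitian_mul_mul_conjTranspose _ (isHermitian_diagonal_of_self_adjoint _ (by
    ext i; simp))
private lemma sqrtOld_mul_self {n : Type*} [Fintype n] [DecidableEq n]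
    {A : Matrix n n ℝ} (hA : A.PosSemidef) : hA.sqrtOld * hA.sqrtOld = A := by
  unfold Matrix.PosSemidef.sqrtOld
  have hU : (star hA.1.eigenvectorUnitary : Matrix n n ℝ) * hA.1.eigenvectorUnitary.1 = 1 :=
    Unitary.star_mul_self_of_mem hA.1.eigenvectorUnitary.2
  conv_rhs => rw [hA.1.spectral_theorem]
  simp only [Matrix.mul_assoc]
  rw [← Matrix.mul_assoc (star _) _, hU, Matrix.one_mul, ← Matrix.mul_assoc (diagonal _),
    diagonal_mul_diagonal, Unitary.conjStarAlgAut_apply, Matrix.mul_assoc]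
  congr 3
  funext i
  simp [Real.mul_self_sqrt (hA.eigenvalues_nonneg i)]

private lemma dp_self_nonneg {k : ℕ} (x : Fin k → ℝ) : 0 ≤ x ⬝ᵥ x :=
  Finset.sum_nonneg fun i _ => mul_self_nonneg _

private lemma norm2_sq {k : ℕ} (x : Fin k → ℝ) : norm2 x ^ 2 = x ⬝ᵥ x := by
  rw [norm2, Real.sq_sqrt (Finset.sum_nonneg fun i _ => sq_nonneg _)]
  simp [dotProduct, sq]

private lemma norm2_nonneg {k : ℕ} (x : Fin k → ℝ) : 0 ≤ norm2 x := Real.sqrt_nonneg _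

/-- With `K := QᵀQ` positive definite, `c := K^{-1/2}Qᵀy`, `s := √(yᵀy − cᵀc)`, and
`R := P K^{1/2}`, one has `‖QPᵀw − y‖₂² = ‖Rᵀw − c‖₂² + s²` for all `w`; consequently the
optimal values of `min_w ‖QPᵀw − y‖₂ + ε‖w‖₂ + λ‖w‖₁` and
`min_w √(‖Rᵀw − c‖₂² + s²) + ε‖w‖₂ + λ‖w‖₁` coincide. -/
theorem sketched_sqrt_lasso_reduction
    {n m k : ℕ} (P : Matrix (Fin n) (Fin k) ℝ) (Q : Matrix (Fin m) (Fin k) ℝ)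
    (hQ : Q.rank = k) (hK : (Qᵀ * Q).PosDef) (y : Fin m → ℝ) :
    ∀ c : Fin k → ℝ, c = (hK.posSemidef.sqrtOld)⁻¹.mulVec (Qᵀ.mulVec y) →
    ∀ s : ℝ, s = Real.sqrt (y ⬝ᵥ y - c ⬝ᵥ c) →
    ∀ R : Matrix (Fin n) (Fin k) ℝ, R = P * hK.posSemidef.sqrtOld →
      (∀ w : Fin n → ℝ,
        norm2 ((Q * Pᵀ).mulVec w - y) ^ 2 = norm2 (Rᵀ.mulVec w - c) ^ 2 + s ^ 2) ∧
      ∀ ε lam : ℝ, 0 ≤ ε → 0 ≤ lam →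
        (⨅ w : Fin n → ℝ,
            norm2 ((Q * Pᵀ).mulVec w - y) + ε * norm2 w + lam * norm1 w) =
          ⨅ w : Fin n → ℝ,
            Real.sqrt (norm2 (Rᵀ.mulVec w - c) ^ 2 + s ^ 2) + ε * norm2 w + lam * norm1 w := by
  intro c hc s hs R hR
  set S := hK.posSemidef.sqrtOld with hS
  have hSt : Sᵀ = S := by
    have h : Sᵀ = S := by
      have h' := sqrtOld_isHermitian hK.posSemidef
      rwa [Matrix.IsHermitian, Matrix.conjTranspose_eq_transpose_of_trivial] at h'
    simpa [Matrix.IsHermitian, Matrix.conjTranspose] using h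
  have hSS : S * S = Qᵀ * Q := sqrtOld_mul_self hK.posSemidef
  have hdet : IsUnit S.det := by
    have h2 : S.det * S.det = (Qᵀ * Q).det := by rw [← Matrix.det_mul, hSS]
    have : (Qᵀ * Q).det ≠ 0 := ne_of_gt hK.det_pos
    exact isUnit_iff_ne_zero.mpr (fun h => by simp [h] at h2; exact this h2.symm)
  have hSinv : S * S⁻¹ = 1 := Matrix.mul_nonsing_inv S hdet
  have hinvS : S⁻¹ * S = 1 := Matrix.nonsing_inv_mul S hdet
  have hSinvT : S⁻¹ᵀ = S⁻¹ := by rw [Matrix.transpose_nonsing_inv, hSt]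
  -- S *ᵥ c = Qᵀ *ᵥ y
  have hSc : S *ᵥ c = Qᵀ *ᵥ y := by
    rw [hc, Matrix.mulVec_mulVec, hSinv, Matrix.one_mulVec]
  -- key scalar facts
  have hQQ : ∀ v : Fin k → ℝ, (Q *ᵥ v) ⬝ᵥ (Q *ᵥ v) = (S *ᵥ v) ⬝ᵥ (S *ᵥ v) := by
    intro v
    rw [dotProduct_mulVec, dotProduct_mulVec, ← Matrix.mulVec_transpose,
      ← Matrix.mulVec_transpose, Matrix.mulVec_mulVec, Matrix.mulVec_mulVec, hSt, hSS]
  have hQy : ∀ v : Fin k → ℝ, (Q *ᵥ v) ⬝ᵥ y = (S *ᵥ v) ⬝ᵥ c := by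
    intro v
    rw [dotProduct_comm _ y, dotProduct_comm _ c, dotProduct_mulVec, dotProduct_mulVec,
      ← Matrix.mulVec_transpose, ← Matrix.mulVec_transpose, hSt, hSc]
  have hyc : y ⬝ᵥ (Q *ᵥ (S⁻¹ *ᵥ c)) = c ⬝ᵥ c := by
    rw [Matrix.mulVec_mulVec, dotProduct_mulVec, ← Matrix.vecMul_vecMul,
      ← Matrix.mulVec_transpose, ← Matrix.mulVec_transpose, hSinvT, ← hc]
  have hcc : (Q *ᵥ (S⁻¹ *ᵥ c)) ⬝ᵥ (Q *ᵥ (S⁻¹ *ᵥ c)) = c ⬝ᵥ c := by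
    rw [hQQ, Matrix.mulVec_mulVec, hSinv, Matrix.one_mulVec]
  -- y⬝y - c⬝c equals a square
  have hsq : y ⬝ᵥ y - c ⬝ᵥ c = (y - Q *ᵥ (S⁻¹ *ᵥ c)) ⬝ᵥ (y - Q *ᵥ (S⁻¹ *ᵥ c)) := by
    rw [sub_dotProduct, dotProduct_sub, dotProduct_sub, hyc, hcc,
      dotProduct_comm (Q *ᵥ (S⁻¹ *ᵥ c)) y, hyc]
    ring
  have hs_nonneg : 0 ≤ y ⬝ᵥ y - c ⬝ᵥ c := hsq ▸ dp_self_nonneg _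
  have hs2 : s ^ 2 = y ⬝ᵥ y - c ⬝ᵥ c := by rw [hs, Real.sq_sqrt hs_nonneg]
  -- the key identity
  have key : ∀ w : Fin n → ℝ,
      norm2 ((Q * Pᵀ).mulVec w - y) ^ 2 = norm2 (Rᵀ.mulVec w - c) ^ 2 + s ^ 2 := by
    intro w
    have hRT : Rᵀ *ᵥ w = S *ᵥ (Pᵀ *ᵥ w) := by
      rw [hR, Matrix.transpose_mul, hSt, ← Matrix.mulVec_mulVec]
    have hQP : (Q * Pᵀ) *ᵥ w = Q *ᵥ (Pᵀ *ᵥ w) := (Matrix.mulVec_mulVec _ _ _).symm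
    set v := Pᵀ *ᵥ w with hv
    rw [norm2_sq, norm2_sq, hs2, hRT, hQP]
    rw [sub_dotProduct, dotProduct_sub, dotProduct_sub,
      sub_dotProduct, dotProduct_sub, dotProduct_sub,
      hQQ v, hQy v, dotProduct_comm y (Q *ᵥ v), hQy v, dotProduct_comm c (S *ᵥ v)]
    ring
  refine ⟨key, fun ε lam hε hlam => ?_⟩
  congr 1
  funext w
  have : Real.sqrt (norm2 (Rᵀ.mulVec w - c) ^ 2 + s ^ 2)
      = norm2 ((Q * Pᵀ).mulVec w - y) := by
    rw [← key w, Real.sqrt_sq (norm2_nonneg _)]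
  rw [this]
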